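/- The generating function of the continuous q-Hermite polynomials satisfies ∑_{n≥0} H_n(cos θ | q) r^n / (q;q)_n = 1 / ((r e^{iθ};q)_∞ (r e^{-iθ};q)_∞) for |r| < 1, |q| < 1. -/

import Mathlib

open Complex
open Finset

/-- The infinite q-Pochhammer symbol `(a;q)_∞ = ∏_{j≥0} (1 - a q^j)`. -/
noncomputable def qPochInf (a q : ℂ) : ℂ := ∏' j : ℕ, (1 - a * q ^ j)

/-- Finite q-Pochhammer symbol `(q;q)_n = ∏_{j=1}^n (1-q^j)`. -/
noncomputable def qPochQ (q : ℂ) (n : ℕ) : ℂ := ∏ j ∈ Finset.range n, (1 - q ^ (j + 1))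

/-- Continuous q-Hermite polynomials via the three-term recurrence
`2x H_n = H_{n+1} + (1-q^n) H_{n-1}`, `H_0 = 1`, `H_1 = 2x`. -/
noncomputable def qHermite (q : ℂ) : ℕ → ℂ → ℂ
  | 0, _ => 1
  | 1, x => 2 * x
  | (n + 2), x => 2 * x * qHermite q (n + 1) x - (1 - q ^ (n + 1)) * qHermite q n x

namespace QHGF

variable {q a : ℂ}

lemma qPochQ_zero (q : ℂ) : qPochQ q 0 = 1 := Finset.prod_range_zero _

lemma qPochQ_succ (q : ℂ) (n : ℕ) :
    qPochQ q (n + 1) = qPochQ q n * (1 - q ^ (n + 1)) := Finset.prod_range_succ _ _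

lemma one_sub_ne_zero_of_norm_lt_one {z : ℂ} (hz : ‖z‖ < 1) : (1 : ℂ) - z ≠ 0 := by
  intro h
  have : z = 1 := by linear_combination -h
  rw [this] at hz
  simp at hz

lemma norm_q_pow_lt_one (hq : ‖q‖ < 1) (j : ℕ) : ‖q ^ (j + 1)‖ < 1 := by
  rw [norm_pow]
  exact pow_lt_one₀ (norm_nonneg q) hq (Nat.succ_ne_zero j)

lemma one_sub_q_pow_ne_zero (hq : ‖q‖ < 1) (j : ℕ) : (1 : ℂ) - q ^ (j + 1) ≠ 0 :=
  one_sub_ne_zero_of_norm_lt_one (norm_q_pow_lt_one hq j)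

lemma qPochQ_ne_zero (hq : ‖q‖ < 1) (n : ℕ) : qPochQ q n ≠ 0 :=
  Finset.prod_ne_zero_iff.2 fun j _ => one_sub_q_pow_ne_zero hq j

lemma one_sub_sum_le_prod (x : ℕ → ℝ) (h0 : ∀ j, 0 ≤ x j) (h1 : ∀ j, x j ≤ 1) (n : ℕ) :
    1 - ∑ j ∈ range n, x j ≤ ∏ j ∈ range n, (1 - x j) := by
  induction n with
  | zero => simp
  | succ n ih =>
    rw [Finset.prod_range_succ, Finset.sum_range_succ]
    have hx := h0 n
    have hx1 := h1 n
    have hprod0 : (0:ℝ) ≤ ∏ j ∈ range n, (1 - x j) :=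
      Finset.prod_nonneg fun j _ => by linarith [h1 j]
    have hsum0 : (0:ℝ) ≤ ∑ j ∈ range n, x j := Finset.sum_nonneg fun j _ => h0 j
    rcases le_or_gt (1 - ∑ j ∈ range n, x j) 0 with h | h
    · nlinarith
    · nlinarith [mul_le_mul_of_nonneg_right ih (by linarith : (0:ℝ) ≤ 1 - x n)]

lemma exists_pos_le_norm_qPochQ (hq : ‖q‖ < 1) :
    ∃ c : ℝ, 0 < c ∧ ∀ n, c ≤ ‖qPochQ q n‖ := by
  set t := ‖q‖ with ht
  have ht0 : 0 ≤ t := norm_nonneg q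
  have ht1 : t < 1 := hq
  set Q : ℕ → ℝ := fun n => ∏ j ∈ range n, (1 - t ^ (j + 1)) with hQ
  have hfac : ∀ j : ℕ, 0 < 1 - t ^ (j + 1) := fun j => by
    have : t ^ (j + 1) < 1 := pow_lt_one₀ ht0 ht1 (Nat.succ_ne_zero j)
    linarith
  have hQpos : ∀ n, 0 < Q n := fun n => Finset.prod_pos fun j _ => hfac j
  have hQle : ∀ n, Q n ≤ ‖qPochQ q n‖ := by
    intro n
    have : ‖qPochQ q n‖ = ∏ j ∈ range n, ‖(1 : ℂ) - q ^ (j + 1)‖ := norm_prod _ _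
    rw [this]
    refine Finset.prod_le_prod (fun j _ => le_of_lt (hfac j)) (fun j _ => ?_)
    calc 1 - t ^ (j + 1) = ‖(1:ℂ)‖ - ‖q ^ (j+1)‖ := by rw [norm_one, norm_pow]
      _ ≤ ‖(1:ℂ) - q ^ (j + 1)‖ := norm_sub_norm_le _ _
  -- choose N with t^(N+1) ≤ (1-t)/2
  obtain ⟨N, hN⟩ : ∃ N : ℕ, t ^ (N + 1) ≤ (1 - t) / 2 := by
    have h2 : (0:ℝ) < (1 - t) / 2 := by linarith
    have := (tendsto_pow_atTop_nhds_zero_of_lt_one ht0 ht1).eventually_le_const h2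
    obtain ⟨N, hN⟩ := this.exists
    exact ⟨N, by calc t ^ (N+1) ≤ t ^ N := pow_le_pow_of_le_one ht0 (le_of_lt ht1) (Nat.le_succ N)
      _ ≤ (1-t)/2 := hN⟩
  refine ⟨Q N * (1/2), mul_pos (hQpos N) (by norm_num), fun n => ?_⟩
  refine le_trans ?_ (hQle n)
  rcases le_total n N with h | h
  · obtain ⟨d, rfl⟩ := Nat.exists_eq_add_of_le h
    have : Q (n + d) ≤ Q n := by
      rw [hQ]
      simp only []
      rw [Finset.prod_range_add]
      have hle1 : ∏ j ∈ range d, (1 - t ^ (n + j + 1)) ≤ 1 :=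
        Finset.prod_le_one (fun j _ => le_of_lt (hfac (n + j))) (fun j _ => by
          have : 0 ≤ t ^ (n + j + 1) := pow_nonneg ht0 _
          linarith)
      calc (∏ j ∈ range n, (1 - t ^ (j+1))) * ∏ j ∈ range d, (1 - t ^ (n + j + 1))
          ≤ (∏ j ∈ range n, (1 - t ^ (j+1))) * 1 :=
            mul_le_mul_of_nonneg_left hle1 (le_of_lt (hQpos n))
        _ = Q n := by rw [mul_one]
    nlinarith [hQpos (n + d), hQpos n]
  · obtain ⟨d, rfl⟩ := Nat.exists_eq_add_of_le h
    have hsplit : Q (N + d) = Q N * ∏ j ∈ range d, (1 - t ^ (N + j + 1)) := by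
      rw [hQ]
      simp only []
      rw [Finset.prod_range_add]
    have hsum : ∑ j ∈ range d, t ^ (N + j + 1) ≤ 1/2 := by
      have heq : ∀ j, t ^ (N + j + 1) = t ^ (N+1) * t ^ j := fun j => by
        rw [← pow_add]; ring_nf
      calc ∑ j ∈ range d, t ^ (N + j + 1) = ∑ j ∈ range d, t ^ (N+1) * t ^ j := by
            exact Finset.sum_congr rfl fun j _ => heq j
        _ = t ^ (N+1) * ∑ j ∈ range d, t ^ j := by rw [Finset.mul_sum]
        _ ≤ ((1-t)/2) * (1-t)⁻¹ := by
            refine mul_le_mul hN ?_ (Finset.sum_nonneg fun j _ => pow_nonneg ht0 j) (by linarith)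
            calc ∑ j ∈ range d, t ^ j ≤ ∑' j : ℕ, t ^ j :=
                  Summable.sum_le_tsum _ (fun j _ => pow_nonneg ht0 j)
                    (summable_geometric_of_lt_one ht0 ht1)
              _ = (1-t)⁻¹ := tsum_geometric_of_lt_one ht0 ht1
        _ = 1/2 := by
            have h1t : (1:ℝ) - t ≠ 0 := by linarith
            field_simp
    have hR : 1/2 ≤ ∏ j ∈ range d, (1 - t ^ (N + j + 1)) := by
      have := one_sub_sum_le_prod (fun j => t ^ (N + j + 1))
        (fun j => pow_nonneg ht0 _)
        (fun j => le_of_lt (lt_of_lt_of_le (pow_lt_one₀ ht0 ht1 (by omega)) le_rfl)) d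
      linarith
    calc Q N * (1/2) ≤ Q N * ∏ j ∈ range d, (1 - t ^ (N + j + 1)) :=
          mul_le_mul_of_nonneg_left hR (le_of_lt (hQpos N))
      _ = Q (N + d) := hsplit.symm


lemma summable_norm_term (hq : ‖q‖ < 1) (ha : ‖a‖ < 1) :
    Summable (fun n => ‖a ^ n / qPochQ q n‖) := by
  obtain ⟨c, hc, hcle⟩ := exists_pos_le_norm_qPochQ hq
  refine Summable.of_nonneg_of_le (fun n => norm_nonneg _) (fun n => ?_)
    ((summable_geometric_of_lt_one (norm_nonneg a) ha).mul_right c⁻¹)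
  rw [norm_div, norm_pow]
  rw [div_eq_mul_inv]
  gcongr
  exact (hcle n)

lemma summable_term (hq : ‖q‖ < 1) (ha : ‖a‖ < 1) :
    Summable (fun n => a ^ n / qPochQ q n) := (summable_norm_term hq ha).of_norm

lemma norm_mul_lt_one (hq : ‖q‖ < 1) (ha : ‖a‖ < 1) : ‖q * a‖ < 1 := by
  rw [norm_mul]
  calc ‖q‖ * ‖a‖ ≤ 1 * ‖a‖ := mul_le_mul_of_nonneg_right (le_of_lt hq) (norm_nonneg a)
    _ < 1 := by rw [one_mul]; exact ha

lemma funEq (hq : ‖q‖ < 1) (ha : ‖a‖ < 1) :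
    (1 - a) * ∑' n, a ^ n / qPochQ q n = ∑' n, (q * a) ^ n / qPochQ q n := by
  have hsa := summable_term hq ha
  have hsqa := summable_term hq (norm_mul_lt_one hq ha)
  set w : ℕ → ℂ := fun n => match n with
    | 0 => 0
    | (m+1) => a ^ (m+1) / qPochQ q m with hwdef
  have hw : ∀ n, a ^ n / qPochQ q n - (q*a) ^ n / qPochQ q n = w n := by
    intro n
    match n with
    | 0 => simp [hwdef]
    | (m+1) =>
      show a ^ (m+1) / qPochQ q (m+1) - (q*a) ^ (m+1) / qPochQ q (m+1) = a ^ (m+1) / qPochQ q m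
      rw [div_sub_div_same, qPochQ_succ, mul_pow]
      rw [show a ^ (m+1) - q ^ (m+1) * a ^ (m+1) = a ^ (m+1) * (1 - q ^ (m+1)) by ring]
      rw [mul_div_mul_right _ _ (one_sub_q_pow_ne_zero hq m)]
  have hsw : Summable w := (hsa.sub hsqa).congr hw
  have h1 : (∑' n, a ^ n / qPochQ q n) - ∑' n, (q*a) ^ n / qPochQ q n = ∑' n, w n := by
    rw [← Summable.tsum_sub hsa hsqa]
    exact tsum_congr hw
  have h2 : ∑' n, w n = a * ∑' n, a ^ n / qPochQ q n := by
    rw [Summable.tsum_eq_zero_add hsw]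
    have hw0 : w 0 = 0 := rfl
    rw [hw0, zero_add, ← tsum_mul_left]
    refine tsum_congr fun n => ?_
    show a ^ (n+1) / qPochQ q n = a * (a ^ n / qPochQ q n)
    rw [pow_succ]
    ring
  linear_combination h1.trans h2

lemma prod_mul_tsum (hq : ‖q‖ < 1) (ha : ‖a‖ < 1) : ∀ N : ℕ,
    (∏ j ∈ range N, (1 - a * q ^ j)) * ∑' n, a ^ n / qPochQ q n
      = ∑' n, (q ^ N * a) ^ n / qPochQ q n := by
  intro N
  induction N with
  | zero => simp
  | succ N ih =>
    have hnorm : ‖q ^ N * a‖ < 1 := by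
      rw [norm_mul, norm_pow]
      calc ‖q‖ ^ N * ‖a‖ ≤ 1 * ‖a‖ := by
            gcongr
            exact pow_le_one₀ (norm_nonneg q) (le_of_lt hq)
        _ < 1 := by rw [one_mul]; exact ha
    have h := funEq hq hnorm
    rw [Finset.prod_range_succ]
    calc (∏ j ∈ range N, (1 - a * q ^ j)) * (1 - a * q ^ N) * ∑' n, a ^ n / qPochQ q n
        = (1 - q ^ N * a) * ((∏ j ∈ range N, (1 - a * q ^ j)) * ∑' n, a ^ n / qPochQ q n) := by
          ring
      _ = (1 - q ^ N * a) * ∑' n, (q ^ N * a) ^ n / qPochQ q n := by rw [ih]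
      _ = ∑' n, (q * (q ^ N * a)) ^ n / qPochQ q n := h
      _ = ∑' n, (q ^ (N+1) * a) ^ n / qPochQ q n := by
          rw [show q * (q ^ N * a) = q ^ (N+1) * a by ring]

lemma tendsto_tail (hq : ‖q‖ < 1) (ha : ‖a‖ < 1) :
    Filter.Tendsto (fun N : ℕ => ∑' n, (q ^ N * a) ^ n / qPochQ q n)
      Filter.atTop (nhds 1) := by
  obtain ⟨c, hc, hcle⟩ := exists_pos_le_norm_qPochQ hq
  set B : ℝ := (1 - ‖a‖)⁻¹ * c⁻¹ with hB
  have hBpos : 0 ≤ B := by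
    rw [hB]
    have : (0:ℝ) < 1 - ‖a‖ := by linarith
    positivity
  have key : ∀ b : ℂ, ‖b‖ ≤ ‖a‖ → ‖(∑' n, b ^ n / qPochQ q n) - 1‖ ≤ ‖b‖ * B := by
    intro b hb
    have hb1 : ‖b‖ < 1 := lt_of_le_of_lt hb ha
    have hsb := summable_term hq hb1
    have h0 : (∑' n, b ^ n / qPochQ q n) - 1 = ∑' n, b ^ (n+1) / qPochQ q (n+1) := by
      rw [Summable.tsum_eq_zero_add hsb]
      simp [qPochQ_zero]
    rw [h0]
    have hgeo : HasSum (fun n : ℕ => ‖b‖ * ‖b‖ ^ n * c⁻¹) (‖b‖ * (1 - ‖b‖)⁻¹ * c⁻¹) :=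
      ((hasSum_geometric_of_lt_one (norm_nonneg b) hb1).mul_left ‖b‖).mul_right c⁻¹
    have hbound : ∀ n : ℕ, ‖b ^ (n+1) / qPochQ q (n+1)‖ ≤ ‖b‖ * ‖b‖ ^ n * c⁻¹ := by
      intro n
      rw [norm_div, norm_pow, div_eq_mul_inv, pow_succ]
      have h1 : (qPochQ q (n+1))⁻¹.normSq = 0 ∨ True := Or.inr trivial
      calc ‖b‖ ^ n * ‖b‖ * ‖qPochQ q (n+1)‖⁻¹ ≤ ‖b‖ ^ n * ‖b‖ * c⁻¹ := by
            gcongr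
            exact hcle (n+1)
        _ = ‖b‖ * ‖b‖ ^ n * c⁻¹ := by ring
    calc ‖∑' n, b ^ (n+1) / qPochQ q (n+1)‖ ≤ ‖b‖ * (1 - ‖b‖)⁻¹ * c⁻¹ :=
          tsum_of_norm_bounded hgeo hbound
      _ ≤ ‖b‖ * (1 - ‖a‖)⁻¹ * c⁻¹ := by
          have h1 : (0:ℝ) < 1 - ‖a‖ := by linarith
          have h2 : 1 - ‖a‖ ≤ 1 - ‖b‖ := by linarith
          gcongr
      _ = ‖b‖ * B := by rw [hB]; ring
  rw [tendsto_iff_norm_sub_tendsto_zero]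
  have htend : Filter.Tendsto (fun N : ℕ => ‖q‖ ^ N * (‖a‖ * B)) Filter.atTop (nhds 0) := by
    have := (tendsto_pow_atTop_nhds_zero_of_lt_one (norm_nonneg q) hq).mul_const (‖a‖ * B)
    simpa using this
  refine squeeze_zero (g := fun N : ℕ => ‖q‖ ^ N * (‖a‖ * B)) (fun N => norm_nonneg _)
    (fun N => ?_) htend
  have hble : ‖q ^ N * a‖ ≤ ‖a‖ := by
    rw [norm_mul, norm_pow]
    calc ‖q‖ ^ N * ‖a‖ ≤ 1 * ‖a‖ :=
          mul_le_mul_of_nonneg_right (pow_le_one₀ (norm_nonneg q) (le_of_lt hq)) (norm_nonneg a)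
      _ = ‖a‖ := one_mul _
  show ‖(∑' n, (q ^ N * a) ^ n / qPochQ q n) - 1‖ ≤ ‖q‖ ^ N * (‖a‖ * B)
  calc ‖(∑' n, (q ^ N * a) ^ n / qPochQ q n) - 1‖ ≤ ‖q ^ N * a‖ * B := key _ hble
    _ = ‖q‖ ^ N * ‖a‖ * B := by rw [norm_mul, norm_pow]
    _ = ‖q‖ ^ N * (‖a‖ * B) := by ring

lemma multipliable_qPochInf (hq : ‖q‖ < 1) (ha : ‖a‖ < 1) :
    Multipliable (fun j : ℕ => 1 - a * q ^ j) := by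
  have hne : ∀ (x : Unit) (n : ℕ), (fun (j : ℕ) (_ : Unit) => 1 - a * q ^ j) n x ≠ 0 := by
    intro x n
    refine one_sub_ne_zero_of_norm_lt_one ?_
    rw [norm_mul, norm_pow]
    calc ‖a‖ * ‖q‖ ^ n ≤ ‖a‖ * 1 := by
          gcongr
          exact pow_le_one₀ (norm_nonneg q) (le_of_lt hq)
      _ < 1 := by rw [mul_one]; exact ha
  have hsum : ∀ (x : Unit),
      Summable fun n : ℕ => Complex.log ((fun (j : ℕ) (_ : Unit) => 1 - a * q ^ j) n x) := by
    intro x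
    refine Summable.of_norm_bounded_eventually_nat
      (g := fun n => 3/2 * (‖a‖ * ‖q‖ ^ n)) ?_ ?_
    · exact ((summable_geometric_of_lt_one (norm_nonneg q) hq).mul_left ‖a‖).mul_left (3/2)
    · have hev : ∀ᶠ n : ℕ in Filter.atTop, ‖a * q ^ n‖ ≤ 1/2 := by
        have := (tendsto_pow_atTop_nhds_zero_of_lt_one (norm_nonneg q) hq).const_mul ‖a‖
        rw [mul_zero] at this
        have h2 := this.eventually_le_const (by norm_num : (0:ℝ) < 1/2)
        refine h2.mono fun n hn => ?_
        rw [norm_mul, norm_pow]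
        exact hn
      refine hev.mono fun n hn => ?_
      show ‖Complex.log (1 - a * q ^ n)‖ ≤ 3/2 * (‖a‖ * ‖q‖ ^ n)
      have heq1 : (1 : ℂ) - a * q ^ n = 1 + (-(a * q ^ n)) := by ring
      rw [heq1]
      calc ‖Complex.log (1 + -(a * q ^ n))‖ ≤ 3/2 * ‖-(a * q ^ n)‖ :=
            Complex.norm_log_one_add_half_le_self (by rw [norm_neg]; exact hn)
        _ = 3/2 * (‖a‖ * ‖q‖ ^ n) := by rw [norm_neg, norm_mul, norm_pow]
  exact Complex.multipliable_of_summable_log (hsum ())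

lemma euler (hq : ‖q‖ < 1) (ha : ‖a‖ < 1) :
    qPochInf a q * ∑' n, a ^ n / qPochQ q n = 1 := by
  have hM := multipliable_qPochInf (q := q) (a := a) hq ha
  have h1 : Filter.Tendsto
      (fun N : ℕ => (∏ j ∈ range N, (1 - a * q ^ j)) * ∑' n, a ^ n / qPochQ q n)
      Filter.atTop (nhds (qPochInf a q * ∑' n, a ^ n / qPochQ q n)) := by
    exact (hM.hasProd.tendsto_prod_nat).mul_const _
  have h2 : Filter.Tendsto
      (fun N : ℕ => (∏ j ∈ range N, (1 - a * q ^ j)) * ∑' n, a ^ n / qPochQ q n)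
      Filter.atTop (nhds 1) := by
    have heq : (fun N : ℕ => (∏ j ∈ range N, (1 - a * q ^ j)) * ∑' n, a ^ n / qPochQ q n)
        = fun N : ℕ => ∑' n, (q ^ N * a) ^ n / qPochQ q n :=
      funext (prod_mul_tsum hq ha)
    rw [heq]
    exact tendsto_tail hq ha
  exact tendsto_nhds_unique h1 h2


noncomputable def qc (q : ℂ) (n k : ℕ) : ℂ := qPochQ q n / (qPochQ q k * qPochQ q (n - k))

lemma qc_zero (hq : ‖q‖ < 1) (n : ℕ) : qc q n 0 = 1 := by
  unfold qc
  rw [qPochQ_zero, Nat.sub_zero, one_mul]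
  exact div_self (qPochQ_ne_zero hq n)

lemma qc_self (hq : ‖q‖ < 1) (n : ℕ) : qc q n n = 1 := by
  unfold qc
  rw [Nat.sub_self, qPochQ_zero, mul_one]
  exact div_self (qPochQ_ne_zero hq n)

lemma qc_pascal (hq : ‖q‖ < 1) {n k : ℕ} (hk : k ≤ n) :
    qc q (n+2) (k+1) = qc q (n+1) (k+1) + qc q (n+1) k - (1 - q ^ (n+1)) * qc q n k := by
  obtain ⟨m, rfl⟩ := Nat.exists_eq_add_of_le hk
  have e1 : k + m + 2 - (k + 1) = m + 1 := by omega
  have e2 : k + m + 1 - (k + 1) = m := by omega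
  have e3 : k + m + 1 - k = m + 1 := by omega
  have e4 : k + m - k = m := by omega
  have p1 : qPochQ q (k+m+2) = qPochQ q (k+m) * (1 - q ^ (k+m+1)) * (1 - q ^ (k+m+2)) := by
    rw [show k+m+2 = (k+m+1)+1 from rfl, qPochQ_succ, qPochQ_succ]
  have p2 : qPochQ q (k+m+1) = qPochQ q (k+m) * (1 - q ^ (k+m+1)) := qPochQ_succ q (k+m)
  have p3 : qPochQ q (k+1) = qPochQ q k * (1 - q ^ (k+1)) := qPochQ_succ q k
  have p4 : qPochQ q (m+1) = qPochQ q m * (1 - q ^ (m+1)) := qPochQ_succ q m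
  have nz1 : qPochQ q k ≠ 0 := qPochQ_ne_zero hq k
  have nz2 : qPochQ q m ≠ 0 := qPochQ_ne_zero hq m
  have f1 : (1:ℂ) - q ^ (k+1) ≠ 0 := one_sub_q_pow_ne_zero hq k
  have f2 : (1:ℂ) - q ^ (m+1) ≠ 0 := one_sub_q_pow_ne_zero hq m
  have hD : (qPochQ q k * (1 - q ^ (k+1))) * (qPochQ q m * (1 - q ^ (m+1))) ≠ 0 :=
    mul_ne_zero (mul_ne_zero nz1 f1) (mul_ne_zero nz2 f2)
  have h1 : qc q (k+m+2) (k+1)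
      = (qPochQ q (k+m) * (1 - q ^ (k+m+1)) * (1 - q ^ (k+m+2)))
        / ((qPochQ q k * (1 - q ^ (k+1))) * (qPochQ q m * (1 - q ^ (m+1)))) := by
    unfold qc
    rw [e1, p1, p3, p4]
  have h2 : qc q (k+m+1) (k+1)
      = (qPochQ q (k+m) * (1 - q ^ (k+m+1)) * (1 - q ^ (m+1)))
        / ((qPochQ q k * (1 - q ^ (k+1))) * (qPochQ q m * (1 - q ^ (m+1)))) := by
    unfold qc
    rw [e2, p2, p3, div_eq_div_iff (mul_ne_zero (mul_ne_zero nz1 f1) nz2) hD]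
    ring
  have h3 : qc q (k+m+1) k
      = (qPochQ q (k+m) * (1 - q ^ (k+m+1)) * (1 - q ^ (k+1)))
        / ((qPochQ q k * (1 - q ^ (k+1))) * (qPochQ q m * (1 - q ^ (m+1)))) := by
    unfold qc
    rw [e3, p2, p4, div_eq_div_iff (mul_ne_zero nz1 (mul_ne_zero nz2 f2)) hD]
    ring
  have h4 : qc q (k+m) k
      = (qPochQ q (k+m) * (1 - q ^ (k+1)) * (1 - q ^ (m+1)))
        / ((qPochQ q k * (1 - q ^ (k+1))) * (qPochQ q m * (1 - q ^ (m+1)))) := by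
    unfold qc
    rw [e4, div_eq_div_iff (mul_ne_zero nz1 nz2) hD]
    ring
  rw [h1, h2, h3, h4, mul_div_assoc', ← add_div, div_sub_div_same]
  congr 1
  ring

lemma step_sum {E F : ℂ} (hq : ‖q‖ < 1) (hEF : E * F = 1) (n : ℕ) :
    (E + F) * (∑ k ∈ range (n+2), qc q (n+1) k * (E ^ (n+1-k) * F ^ k))
      - (1 - q ^ (n+1)) * (∑ k ∈ range (n+1), qc q n k * (E ^ (n-k) * F ^ k))
    = ∑ k ∈ range (n+3), qc q (n+2) k * (E ^ (n+2-k) * F ^ k) := by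
  rw [add_mul, Finset.mul_sum, Finset.mul_sum, Finset.mul_sum]
  rw [Finset.sum_range_succ' (fun k => qc q (n+2) k * (E ^ (n+2-k) * F ^ k)) (n+2)]
  rw [Finset.sum_range_succ (fun k => qc q (n+2) (k+1) * (E ^ (n+2-(k+1)) * F ^ (k+1))) (n+1)]
  rw [Finset.sum_range_succ' (fun k => E * (qc q (n+1) k * (E ^ (n+1-k) * F ^ k))) (n+1)]
  rw [Finset.sum_range_succ (fun k => F * (qc q (n+1) k * (E ^ (n+1-k) * F ^ k))) (n+1)]
  have hA : ∑ k ∈ range (n+1), qc q (n+2) (k+1) * (E ^ (n+2-(k+1)) * F ^ (k+1))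
      = ∑ k ∈ range (n+1), (E * (qc q (n+1) (k+1) * (E ^ (n+1-(k+1)) * F ^ (k+1)))
          + F * (qc q (n+1) k * (E ^ (n+1-k) * F ^ k))
          - (1 - q ^ (n+1)) * (qc q n k * (E ^ (n-k) * F ^ k))) := by
    refine Finset.sum_congr rfl fun k hk => ?_
    have hkn : k ≤ n := Nat.lt_succ_iff.1 (Finset.mem_range.1 hk)
    have e1 : n+2-(k+1) = (n-k)+1 := by omega
    have e2 : n+1-(k+1) = n-k := by omega
    have e3 : n+1-k = (n-k)+1 := by omega
    rw [e1, e2, e3, qc_pascal hq hkn]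
    linear_combination (-(1 - q ^ (n+1)) * qc q n k * E ^ (n-k) * F ^ k) * hEF
  rw [hA, Finset.sum_sub_distrib, Finset.sum_add_distrib]
  simp only [Nat.sub_self, Nat.sub_zero, Nat.add_sub_cancel, pow_zero, one_mul, mul_one,
    qc_zero hq, qc_self hq]
  ring

lemma qHermite_explicit (hq : ‖q‖ < 1) (E F x : ℂ) (hEF : E * F = 1) (hx : 2 * x = E + F) :
    ∀ n, qHermite q n x = ∑ k ∈ range (n+1), qc q n k * (E ^ (n-k) * F ^ k) := by
  have key : ∀ n, qHermite q n x = (∑ k ∈ range (n+1), qc q n k * (E ^ (n-k) * F ^ k))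
      ∧ qHermite q (n+1) x = ∑ k ∈ range (n+2), qc q (n+1) k * (E ^ (n+1-k) * F ^ k) := by
    intro n
    induction n with
    | zero =>
      constructor
      · show (1 : ℂ) = _
        rw [Finset.sum_range_one]
        simp [qc_zero hq]
      · show 2 * x = _
        rw [Finset.sum_range_succ, Finset.sum_range_one]
        simp only [Nat.sub_self, Nat.sub_zero, pow_zero, pow_one, one_mul, mul_one,
          qc_zero hq, qc_self hq]
        rw [hx]
        ring
    | succ n ih =>
      refine ⟨ih.2, ?_⟩
      show 2 * x * qHermite q (n + 1) x - (1 - q ^ (n + 1)) * qHermite q n x = _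
      rw [ih.1, ih.2, hx]
      exact step_sum hq hEF n
  exact fun n => (key n).1

end QHGF

/-- Generating function of the continuous q-Hermite polynomials:
`∑_{n≥0} H_n(cos θ|q) r^n/(q;q)_n = 1/((r e^{iθ};q)_∞ (r e^{-iθ};q)_∞)`. -/
theorem qHermite_generating_function (q r : ℂ) (θ : ℝ)
    (hq : ‖q‖ < 1) (hr : ‖r‖ < 1) :
    ∑' n : ℕ, qHermite q n ((Real.cos θ : ℂ)) * r ^ n / qPochQ q n =
      1 / (qPochInf (r * Complex.exp (I * θ)) q * qPochInf (r * Complex.exp (-I * θ)) q) := by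
  classical
  set E := Complex.exp (I * θ) with hEdef
  set F := Complex.exp (-I * θ) with hFdef
  have hEF : E * F = 1 := by
    rw [hEdef, hFdef, ← Complex.exp_add, show I * θ + -I * θ = 0 by ring, Complex.exp_zero]
  have hnE : ‖E‖ = 1 := by
    rw [hEdef, Complex.norm_exp]
    simp [Complex.mul_re]
  have hnF : ‖F‖ = 1 := by
    rw [hFdef, Complex.norm_exp]
    simp [Complex.mul_re]
  have hx : 2 * ((Real.cos θ : ℂ)) = E + F := by
    rw [Complex.ofReal_cos,
      show Complex.cos (θ:ℂ) = (Complex.exp ((θ:ℂ) * I) + Complex.exp (-(θ:ℂ) * I)) / 2 from rfl]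
    rw [hEdef, hFdef, show (θ:ℂ) * I = I * θ by ring, show -(θ:ℂ) * I = -I * θ by ring]
    ring
  have hrE : ‖r * E‖ < 1 := by rw [norm_mul, hnE, mul_one]; exact hr
  have hrF : ‖r * F‖ < 1 := by rw [norm_mul, hnF, mul_one]; exact hr
  have hgnorm := QHGF.summable_norm_term hq hrE
  have hhnorm := QHGF.summable_norm_term hq hrF
  have hterm : ∀ n : ℕ, qHermite q n ((Real.cos θ : ℂ)) * r ^ n / qPochQ q n
      = ∑ k ∈ Finset.range (n+1),
          ((r*E) ^ (n-k) / qPochQ q (n-k)) * ((r*F) ^ k / qPochQ q k) := by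
    intro n
    rw [QHGF.qHermite_explicit hq E F _ hEF hx n, Finset.sum_mul, Finset.sum_div]
    refine Finset.sum_congr rfl fun k hk => ?_
    have hkn : k ≤ n := Nat.lt_succ_iff.1 (Finset.mem_range.1 hk)
    have hrn : r ^ n = r ^ (n-k) * r ^ k := by rw [← pow_add]; congr 1; omega
    unfold QHGF.qc
    rw [hrn, mul_pow, mul_pow]
    have nzn := QHGF.qPochQ_ne_zero hq n
    have nzk := QHGF.qPochQ_ne_zero hq k
    have nzm := QHGF.qPochQ_ne_zero hq (n - k)
    field_simp
  calc ∑' n : ℕ, qHermite q n ((Real.cos θ : ℂ)) * r ^ n / qPochQ q n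
      = ∑' n : ℕ, ∑ k ∈ Finset.range (n+1),
          ((r*E) ^ (n-k) / qPochQ q (n-k)) * ((r*F) ^ k / qPochQ q k) := tsum_congr hterm
    _ = ∑' n : ℕ, ∑ k ∈ Finset.range (n+1),
          ((r*E) ^ k / qPochQ q k) * ((r*F) ^ (n-k) / qPochQ q (n-k)) := by
        refine tsum_congr fun n => ?_
        rw [← Finset.sum_range_reflect
          (fun k => ((r*E) ^ k / qPochQ q k) * ((r*F) ^ (n-k) / qPochQ q (n-k))) (n+1)]
        refine Finset.sum_congr rfl fun j hj => ?_
        have hjn : j ≤ n := Nat.lt_succ_iff.1 (Finset.mem_range.1 hj)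
        have h1 : n + 1 - 1 - j = n - j := by omega
        rw [h1]
        have h2 : n - (n - j) = j := by omega
        rw [h2]
    _ = (∑' n : ℕ, (r*E) ^ n / qPochQ q n) * (∑' n : ℕ, (r*F) ^ n / qPochQ q n) :=
        (tsum_mul_tsum_eq_tsum_sum_range_of_summable_norm hgnorm hhnorm).symm
    _ = 1 / (qPochInf (r * E) q * qPochInf (r * F) q) := by
        have e1 := QHGF.euler hq hrE
        have e2 := QHGF.euler hq hrF
        refine eq_one_div_of_mul_eq_one_left ?_
        calc ((∑' n : ℕ, (r*E) ^ n / qPochQ q n) * (∑' n : ℕ, (r*F) ^ n / qPochQ q n))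
              * (qPochInf (r*E) q * qPochInf (r*F) q)
            = (qPochInf (r*E) q * ∑' n : ℕ, (r*E) ^ n / qPochQ q n)
              * (qPochInf (r*F) q * ∑' n : ℕ, (r*F) ^ n / qPochQ q n) := by ring
          _ = 1 := by rw [e1, e2, one_mul]
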